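/- arXiv:1205.4482 — 2 statements merged into one kernel-verified Lean document; each statement's English description precedes it below -/
import Mathlib

section
/- Let X be a real Banach space, 1 ≤ p < ∞, and A : X ⇉ X* a monotone operator with nonempty graph. Suppose that for every z ∉ cl(dom A) and all sufficiently large λ > 0, the operator A + λ J_p(· − z) is maximally monotone. Then cl(dom A) = cl(conv(dom A)) = cl(P_X[dom F_A]), so dom A is nearly convex (its closure is convex). -/
open Set

noncomputable section

variable {X : Type*}

/-- The domain of a set-valued operator `A : X ⇉ X*`, identified with its graph. -/
def opDom [NormedAddCommGroup X] [NormedSpace ℝ X]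
    (A : Set (X × (X →L[ℝ] ℝ))) : Set X := Prod.fst '' A

/-- The range of a set-valued operator. -/
def opRan [NormedAddCommGroup X] [NormedSpace ℝ X]
    (A : Set (X × (X →L[ℝ] ℝ))) : Set (X →L[ℝ] ℝ) := Prod.snd '' A

/-- `(x, x*)` is monotonically related to the set `S ⊆ X × X*`:
`⟨x − y, x* − y*⟩ ≥ 0` for all `(y, y*) ∈ S`. -/
def MonRel [NormedAddCommGroup X] [NormedSpace ℝ X]
    (p : X × (X →L[ℝ] ℝ)) (S : Set (X × (X →L[ℝ] ℝ))) : Prop :=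
  ∀ q ∈ S, 0 ≤ (p.2 - q.2) (p.1 - q.1)

/-- `A` is a monotone operator (identified with its graph). -/
def IsMonotoneOp [NormedAddCommGroup X] [NormedSpace ℝ X]
    (A : Set (X × (X →L[ℝ] ℝ))) : Prop :=
  ∀ p ∈ A, MonRel p A

/-- `A` is maximally monotone: it is monotone and every monotonically related
pair already belongs to the graph. -/
def IsMaxMonotoneOp [NormedAddCommGroup X] [NormedSpace ℝ X]
    (A : Set (X × (X →L[ℝ] ℝ))) : Prop :=
  IsMonotoneOp A ∧ ∀ p : X × (X →L[ℝ] ℝ), MonRel p A → p ∈ A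

/-- The Fitzpatrick function of `A`, with values in `(-∞, +∞]` (modeled in `EReal`):
`F_A(x, x*) = sup_{(a,a*) ∈ A} (⟨a, x*⟩ + ⟨x, a*⟩ − ⟨a, a*⟩)`. -/
def fitz [NormedAddCommGroup X] [NormedSpace ℝ X]
    (A : Set (X × (X →L[ℝ] ℝ))) (x : X) (x' : X →L[ℝ] ℝ) : EReal :=
  ⨆ a ∈ A, ((x' a.1 + a.2 x - a.2 a.1 : ℝ) : EReal)

/-- The domain of the Fitzpatrick function: the set of pairs where `F_A < +∞`. -/
def fitzDom [NormedAddCommGroup X] [NormedSpace ℝ X]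
    (A : Set (X × (X →L[ℝ] ℝ))) : Set (X × (X →L[ℝ] ℝ)) :=
  {q | fitz A q.1 q.2 < ⊤}

/-- `J_p(x) = (1/p) ∂‖·‖^p (x)`, the subdifferential at `x` of `y ↦ ‖y‖^p / p`. -/
def Jmap [NormedAddCommGroup X] [NormedSpace ℝ X]
    (p : ℝ) (x : X) : Set (X →L[ℝ] ℝ) :=
  {x' | ∀ y : X, x' (y - x) + ‖x‖ ^ p / p ≤ ‖y‖ ^ p / p}

/-- The graph of the operator `A + λ J_p(· − z)`. -/
def sumGraph [NormedAddCommGroup X] [NormedSpace ℝ X]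
    (A : Set (X × (X →L[ℝ] ℝ))) (lam p : ℝ) (z : X) :
    Set (X × (X →L[ℝ] ℝ)) :=
  {q | ∃ a' b' : X →L[ℝ] ℝ, (q.1, a') ∈ A ∧ b' ∈ Jmap p (q.1 - z) ∧ q.2 = a' + lam • b'}

section AuxLemmas

variable [NormedAddCommGroup X] [NormedSpace ℝ X]

lemma term_le_fitz (A : Set (X × (X →L[ℝ] ℝ))) {a : X × (X →L[ℝ] ℝ)} (ha : a ∈ A)
    (x : X) (x' : X →L[ℝ] ℝ) :
    ((x' a.1 + a.2 x - a.2 a.1 : ℝ) : EReal) ≤ fitz A x x' :=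
  le_iSup₂ (f := fun a (_ : a ∈ A) => ((x' a.1 + a.2 x - a.2 a.1 : ℝ) : EReal)) a ha

lemma term_le_toReal (A : Set (X × (X →L[ℝ] ℝ))) {x : X} {x' : X →L[ℝ] ℝ}
    (hlt : fitz A x x' < ⊤) {a : X × (X →L[ℝ] ℝ)} (ha : a ∈ A) :
    x' a.1 + a.2 x - a.2 a.1 ≤ (fitz A x x').toReal := by
  have h1 := term_le_fitz A ha x x'
  have hbot : fitz A x x' ≠ ⊥ := ((EReal.bot_lt_coe _).trans_le h1).ne'
  rw [← EReal.coe_toReal hlt.ne hbot] at h1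
  exact_mod_cast h1

lemma fitzDom_convex (A : Set (X × (X →L[ℝ] ℝ))) : Convex ℝ (fitzDom A) := by
  intro q hq r hr a b ha hb hab
  simp only [fitzDom, Set.mem_setOf_eq] at hq hr ⊢
  have key : fitz A (a • q + b • r).1 (a • q + b • r).2 ≤
      ((a * (fitz A q.1 q.2).toReal + b * (fitz A r.1 r.2).toReal : ℝ) : EReal) := by
    apply iSup₂_le
    intro w hw
    rw [EReal.coe_le_coe_iff]
    have h1 := term_le_toReal A hq hw
    have h2 := term_le_toReal A hr hw
    have e : ((a • q + b • r).2) w.1 + w.2 ((a • q + b • r).1) - w.2 w.1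
        = a * (q.2 w.1 + w.2 q.1 - w.2 w.1) + b * (r.2 w.1 + w.2 r.1 - w.2 w.1) := by
      simp [Prod.smul_fst, Prod.smul_snd, ContinuousLinearMap.add_apply,
        ContinuousLinearMap.smul_apply, map_add, map_smul, smul_eq_mul]
      linear_combination (w.2 w.1 : ℝ) * hab
    rw [e]
    have := mul_le_mul_of_nonneg_left h1 ha
    have := mul_le_mul_of_nonneg_left h2 hb
    linarith
  exact key.trans_lt (EReal.coe_lt_top _)

end AuxLemmas

/-- Theorem: if `A` is monotone with nonempty graph and for every `z ∉ cl(dom A)` and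
all sufficiently large `λ > 0` the operator `A + λ J_p(· − z)` is maximally monotone,
then `cl(dom A) = cl(conv(dom A)) = cl(P_X[dom F_A])`, so `dom A` is nearly convex. -/
theorem nearly_convex_of_maxMonotone_sum
    [NormedAddCommGroup X] [NormedSpace ℝ X] [CompleteSpace X]
    (p : ℝ) (hp : 1 ≤ p)
    (A : Set (X × (X →L[ℝ] ℝ))) (hne : A.Nonempty) (hmono : IsMonotoneOp A)
    (h : ∀ z ∉ closure (opDom A), ∃ Λ : ℝ, 0 < Λ ∧ ∀ lam : ℝ, Λ ≤ lam →
      IsMaxMonotoneOp (sumGraph A lam p z)) :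
    closure (opDom A) = closure (convexHull ℝ (opDom A)) ∧
    closure (opDom A) = closure (Prod.fst '' fitzDom A) ∧
    Convex ℝ (closure (opDom A)) := by
  classical
  set D := opDom A with hDdef
  set C := Prod.fst '' fitzDom A with hCdef
  have hDC : D ⊆ C := by
    rintro x ⟨a, ha, rfl⟩
    refine ⟨a, ?_, rfl⟩
    show fitz A a.1 a.2 < ⊤
    have hle : fitz A a.1 a.2 ≤ ((a.2 a.1 : ℝ) : EReal) := by
      apply iSup₂_le
      intro w hw
      rw [EReal.coe_le_coe_iff]
      have hm := hmono a ha w hw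
      simp only [ContinuousLinearMap.sub_apply, map_sub] at hm
      linarith
    exact hle.trans_lt (EReal.coe_lt_top _)
  have hCcl : C ⊆ closure D := by
    rintro z ⟨q, hq, rfl⟩
    by_contra hzc
    obtain ⟨Λ, hΛ, hmax⟩ := h q.1 hzc
    have hDne : D.Nonempty := hne.image _
    set d := Metric.infDist q.1 D with hddef
    have hd : 0 < d := by
      have := (isClosed_closure.notMem_iff_infDist_pos hDne.closure).1 hzc
      rwa [Metric.infDist_closure] at this
    have hp0 : (0 : ℝ) < p := lt_of_lt_of_le one_pos hp
    have hdp : (0 : ℝ) < d ^ p := Real.rpow_pos_of_pos hd p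
    have hq' : fitz A q.1 q.2 < ⊤ := hq
    set M := (fitz A q.1 q.2).toReal with hMdef
    set lam := max Λ (p * (M - q.2 q.1) / d ^ p) with hlamdef
    have hlamΛ : Λ ≤ lam := le_max_left _ _
    have hlam0 : 0 < lam := lt_of_lt_of_le hΛ hlamΛ
    have hkey : p * (M - q.2 q.1) ≤ lam * d ^ p := by
      have h2 := le_max_right Λ (p * (M - q.2 q.1) / d ^ p)
      rw [div_le_iff₀ hdp] at h2
      linarith [h2]
    have hmon : MonRel (q.1, q.2) (sumGraph A lam p q.1) := by
      rintro w ⟨a', b', hA, hb, hw2⟩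
      have hw1D : w.1 ∈ D := ⟨(w.1, a'), hA, rfl⟩
      have hdist : d ≤ ‖w.1 - q.1‖ := by
        have := Metric.infDist_le_dist_of_mem (x := q.1) hw1D
        rwa [dist_comm, dist_eq_norm] at this
      have hnormp : d ^ p ≤ ‖w.1 - q.1‖ ^ p := Real.rpow_le_rpow hd.le hdist hp0.le
      have hbb : p * b' (q.1 - w.1) ≤ -(‖w.1 - q.1‖ ^ p) := by
        have h0 := hb 0
        rw [zero_sub, map_neg, norm_zero, Real.zero_rpow hp0.ne', zero_div] at h0
        have : b' (q.1 - w.1) = -(b' (w.1 - q.1)) := by rw [← map_neg, neg_sub]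
        rw [this]
        have h0' : -(b' (w.1 - q.1)) ≤ -(‖w.1 - q.1‖ ^ p / p) := by linarith
        calc p * -(b' (w.1 - q.1)) ≤ p * -(‖w.1 - q.1‖ ^ p / p) :=
              mul_le_mul_of_nonneg_left h0' hp0.le
          _ = -(‖w.1 - q.1‖ ^ p) := by field_simp [mul_comm]
      have hterm := term_le_toReal A hq' hA
      show 0 ≤ ((q.1, q.2).2 - w.2) ((q.1, q.2).1 - w.1)
      rw [hw2]
      have expand : ((q.1, q.2).2 - (a' + lam • b')) ((q.1, q.2).1 - w.1)
          = (q.2 q.1 - (q.2 w.1 + a' q.1 - a' w.1)) - lam * b' (q.1 - w.1) := by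
        simp [ContinuousLinearMap.sub_apply, ContinuousLinearMap.add_apply,
          ContinuousLinearMap.smul_apply, map_sub, smul_eq_mul]
        ring
      rw [expand]
      simp only at hterm
      have f1 : lam * (p * b' (q.1 - w.1)) ≤ lam * (-(‖w.1 - q.1‖ ^ p)) :=
        mul_le_mul_of_nonneg_left hbb hlam0.le
      have f2 : lam * d ^ p ≤ lam * ‖w.1 - q.1‖ ^ p :=
        mul_le_mul_of_nonneg_left hnormp hlam0.le
      nlinarith [f1, f2, hkey, hterm, hp0]
    have hin := (hmax lam hlamΛ).2 (q.1, q.2) hmon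
    obtain ⟨a', b', hA, _, _⟩ := hin
    exact hzc (subset_closure ⟨(q.1, a'), hA, rfl⟩)
  have hCconv : Convex ℝ C := by
    rw [hCdef]
    have := (fitzDom_convex A).linear_image (LinearMap.fst ℝ X (X →L[ℝ] ℝ))
    exact this
  have hclDC : closure D = closure C :=
    le_antisymm (closure_mono hDC) (by simpa using closure_mono hCcl)
  have hconvC : convexHull ℝ D ⊆ C := convexHull_min hDC hCconv
  have h1 : closure D = closure (convexHull ℝ D) := by
    refine le_antisymm (closure_mono (subset_convexHull ℝ D)) ?_
    calc closure (convexHull ℝ D) ⊆ closure C := closure_mono hconvC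
      _ = closure D := hclDC.symm
  exact ⟨h1, hclDC, h1 ▸ (convex_convexHull ℝ D).closure⟩
end
end

section
/- Let X be a real Banach space and A : X ⇉ X* a maximally monotone operator such that for every z ∈ X and every λ > 0 the operator A + λ J_1(· − z) is maximally monotone (i.e., A is Verona regular). Then cl(dom A) = cl(conv(dom A)) = cl(P_X[dom F_A]); in particular dom A is nearly convex (its closure is convex). -/
open Set

noncomputable section

variable {X : Type*}

/-- Finiteness of the Fitzpatrick value is equivalent to a uniform real bound. -/
lemma fitz_lt_top_iff [NormedAddCommGroup X] [NormedSpace ℝ X]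
    (A : Set (X × (X →L[ℝ] ℝ))) (x : X) (x' : X →L[ℝ] ℝ) :
    fitz A x x' < ⊤ ↔ ∃ M : ℝ, ∀ a ∈ A, x' a.1 + a.2 x - a.2 a.1 ≤ M := by
  constructor
  · intro h
    refine ⟨(fitz A x x').toReal, fun a ha => ?_⟩
    have h1 : ((x' a.1 + a.2 x - a.2 a.1 : ℝ) : EReal) ≤ fitz A x x' :=
      le_iSup₂_of_le a ha le_rfl
    have h2 : fitz A x x' ≤ ((fitz A x x').toReal : EReal) :=
      EReal.le_coe_toReal h.ne
    exact_mod_cast h1.trans h2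
  · rintro ⟨M, hM⟩
    have : fitz A x x' ≤ (M : EReal) :=
      iSup₂_le fun a ha => EReal.coe_le_coe_iff.mpr (hM a ha)
    exact lt_of_le_of_lt this (EReal.coe_lt_top M)

/-- Corollary: if `A` is maximally monotone and Verona regular, i.e. `A + λ J_1(· − z)`
is maximally monotone for every `z ∈ X` and `λ > 0`, then
`cl(dom A) = cl(conv(dom A)) = cl(P_X[dom F_A])`; in particular `dom A` is nearly
convex. -/
theorem nearly_convex_of_veronaRegular
    [NormedAddCommGroup X] [NormedSpace ℝ X] [CompleteSpace X]
    (A : Set (X × (X →L[ℝ] ℝ))) (hA : IsMaxMonotoneOp A)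
    (hver : ∀ z : X, ∀ lam : ℝ, 0 < lam → IsMaxMonotoneOp (sumGraph A lam 1 z)) :
    closure (opDom A) = closure (convexHull ℝ (opDom A)) ∧
    closure (opDom A) = closure (Prod.fst '' fitzDom A) ∧
    Convex ℝ (closure (opDom A)) := by
  classical
  -- Step A : dom A ⊆ P_X (dom F_A)
  have hDS : opDom A ⊆ Prod.fst '' fitzDom A := by
    rintro x ⟨⟨x₀, x₀'⟩, hx₀, rfl⟩
    refine ⟨(x₀, x₀'), ?_, rfl⟩
    rw [fitzDom, mem_setOf_eq]
    rw [fitz_lt_top_iff]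
    refine ⟨x₀' x₀, fun p hp => ?_⟩
    have := hA.1 (x₀, x₀') hx₀ p hp
    simp only [ContinuousLinearMap.sub_apply, map_sub] at this
    linarith
  -- Step B : P_X (dom F_A) ⊆ closure (dom A), using Verona regularity
  have hS_clD : Prod.fst '' fitzDom A ⊆ closure (opDom A) := by
    rintro x ⟨⟨x₀, x'⟩, hq, rfl⟩
    rw [fitzDom, mem_setOf_eq, fitz_lt_top_iff] at hq
    obtain ⟨M, hM⟩ := hq
    rw [Metric.mem_closure_iff]
    intro ε hε
    set C : ℝ := max (M - x' x₀) 0 with hCdef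
    have hC0 : 0 ≤ C := le_max_right _ _
    have hCM : M - x' x₀ ≤ C := le_max_left _ _
    set lam : ℝ := (C + 1) / ε with hlamdef
    have hlam : 0 < lam := div_pos (by linarith) hε
    obtain ⟨hBmono, hBmax⟩ := hver x₀ lam hlam
    by_cases hmr : MonRel (x₀, x') (sumGraph A lam 1 x₀)
    · obtain ⟨a', b', haA, -, -⟩ := hBmax _ hmr
      exact ⟨x₀, ⟨(x₀, a'), haA, rfl⟩, by simpa using hε⟩
    · rw [MonRel] at hmr
      push_neg at hmr
      obtain ⟨⟨b, b'⟩, hqB, hneg⟩ := hmr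
      obtain ⟨a', u', haA, hu', hb'⟩ := hqB
      simp only at hb'
      subst hb'
      -- property of J₁ : u'(x₀ - b) ≤ -‖b - x₀‖
      have hu : u' (x₀ - b) + ‖b - x₀‖ ≤ 0 := by
        have h0 := hu' 0
        simp only [zero_sub, map_neg, Real.rpow_one, norm_zero, div_one] at h0
        have : -(u' (b - x₀)) = u' (x₀ - b) := by rw [← map_neg, neg_sub]
        linarith [h0, this.symm ▸ h0]
      -- the Fitzpatrick lower bound at (b, a') ∈ A
      have hMb := hM (b, a') haA
      simp only at hMb
      -- unpack the negativity
      simp only [ContinuousLinearMap.sub_apply, ContinuousLinearMap.add_apply,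
        ContinuousLinearMap.smul_apply, smul_eq_mul, map_sub] at hneg
      -- hneg : x' x₀ - x' b - (a' x₀ - a' b + lam * (u' x₀ - u' b)) < 0
      have hux : u' x₀ - u' b = u' (x₀ - b) := (map_sub u' x₀ b).symm
      have key : lam * ‖b - x₀‖ < C := by
        have h1 : lam * (u' (x₀ - b)) ≤ lam * (-‖b - x₀‖) :=
          mul_le_mul_of_nonneg_left (by linarith) hlam.le
        nlinarith [hneg, hMb, hux, h1]
      have hbnorm : ‖b - x₀‖ < C / lam := by
        rw [lt_div_iff₀ hlam, mul_comm]; exact key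
      refine ⟨b, ⟨(b, a'), haA, rfl⟩, ?_⟩
      rw [dist_eq_norm, norm_sub_rev]
      calc ‖b - x₀‖ < C / lam := hbnorm
        _ = C * ε / (C + 1) := by
            rw [hlamdef]; field_simp
        _ < ε := by
            rw [div_lt_iff₀ (by linarith : (0:ℝ) < C + 1)]
            nlinarith
  -- Step C : P_X (dom F_A) is convex
  have hSconv : Convex ℝ (Prod.fst '' fitzDom A) := by
    rintro x₁ ⟨⟨y₁, x₁'⟩, h₁, rfl⟩ x₂ ⟨⟨y₂, x₂'⟩, h₂, rfl⟩ a b ha hb hab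
    rw [fitzDom, mem_setOf_eq, fitz_lt_top_iff] at h₁ h₂
    obtain ⟨M₁, hM₁⟩ := h₁
    obtain ⟨M₂, hM₂⟩ := h₂
    refine ⟨(a • y₁ + b • y₂, a • x₁' + b • x₂'), ?_, rfl⟩
    rw [fitzDom, mem_setOf_eq]
    rw [fitz_lt_top_iff]
    refine ⟨a * M₁ + b * M₂, fun p hp => ?_⟩
    have h1 := mul_le_mul_of_nonneg_left (hM₁ p hp) ha
    have h2 := mul_le_mul_of_nonneg_left (hM₂ p hp) hb
    have ht : a * (p.2 p.1) + b * (p.2 p.1) = p.2 p.1 := by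
      rw [← add_mul, hab, one_mul]
    simp only [ContinuousLinearMap.add_apply, ContinuousLinearMap.smul_apply,
      map_add, map_smul, smul_eq_mul]
    nlinarith [h1, h2, ht]
  -- Assemble the conclusions
  have hclo : closure (opDom A) = closure (Prod.fst '' fitzDom A) :=
    Subset.antisymm (closure_mono hDS) (closure_minimal hS_clD isClosed_closure)
  refine ⟨?_, hclo, ?_⟩
  · refine Subset.antisymm (closure_mono (subset_convexHull ℝ _)) ?_
    have : convexHull ℝ (opDom A) ⊆ Prod.fst '' fitzDom A :=
      convexHull_min hDS hSconv
    exact (closure_mono this).trans (le_of_eq hclo.symm)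
  · rw [hclo]
    exact hSconv.closure
end
end
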